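/- Let A, B, C ∈ ℂ with C ≠ 0 and |A| ≥ |C|. Then the operator f ↦ (Az+B)f + Cf' has no eigenvalues in the Fock space: there is no ζ ∈ ℂ and nonzero f ∈ F²(ℂ) with (Az+B)f(z) + Cf'(z) = ζ f(z) for all z. -/

import Mathlib

open MeasureTheory Complex Finset

noncomputable def fockNorm (f : ℂ → ℂ) : ℝ :=
  Real.sqrt ((1 / Real.pi) * ∫ z : ℂ, ‖f z‖ ^ 2 * Real.exp (-‖z‖ ^ 2))

def MemFock (f : ℂ → ℂ) : Prop :=
  Differentiable ℂ f ∧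
    MeasureTheory.Integrable (fun z : ℂ => ‖f z‖ ^ 2 * Real.exp (-‖z‖ ^ 2))

private lemma exp_affine_not_integrable (K γ : ℝ) (hK : 0 < K) (h : ℝ → ℝ)
    (hge : ∀ y, K * Real.exp (γ * y) ≤ h y) : ¬ Integrable h := by
  intro hint
  have key : ∀ S : Set ℝ, MeasurableSet S → volume S = ⊤ → (∀ y ∈ S, K ≤ h y) → False := by
    intro S hS hvol hbd
    have hres : IntegrableOn h S := hint.integrableOn
    have hc : Integrable (fun _ : ℝ => K) (volume.restrict S) := by
      refine hres.mono' aestronglyMeasurable_const ?_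
      filter_upwards [ae_restrict_mem hS] with y hy
      rw [Real.norm_of_nonneg hK.le]; exact hbd y hy
    rcases integrable_const_iff.mp hc with h0 | hfin
    · exact hK.ne' h0
    · have hfin := hfin.measure_univ_lt_top
      rw [Measure.restrict_apply_univ, hvol] at hfin; exact lt_irrefl _ hfin
  rcases le_or_gt 0 γ with hγ | hγ
  · refine key (Set.Ici 0) measurableSet_Ici Real.volume_Ici fun y hy => ?_
    have := Real.one_le_exp (mul_nonneg hγ hy)
    nlinarith [hge y]
  · refine key (Set.Iic 0) measurableSet_Iic Real.volume_Iic fun y hy => ?_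
    have := Real.one_le_exp (mul_nonneg_of_nonpos_of_nonpos hγ.le hy)
    nlinarith [hge y]

private lemma ode_solution (f : ℂ → ℂ) (hf : Differentiable ℂ f) (a b : ℂ)
    (hode : ∀ z, deriv f z = (2 * a * z + b) * f z) :
    ∀ z, f z = f 0 * Complex.exp (a * z ^ 2 + b * z) := by
  have hgd : ∀ z : ℂ, HasDerivAt (fun z : ℂ => a * z ^ 2 + b * z) (2 * a * z + b) z := by
    intro z
    have h1 : HasDerivAt (fun z : ℂ => a * z ^ 2) (a * (2 * z ^ 1)) z :=
      (hasDerivAt_pow 2 z).const_mul a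
    have h2 : HasDerivAt (fun z : ℂ => b * z) (b * 1) z := (hasDerivAt_id z).const_mul b
    exact (h1.add h2).congr_deriv (by ring)
  have hh : ∀ z : ℂ, HasDerivAt (fun z => f z * Complex.exp (-(a * z ^ 2 + b * z))) 0 z := by
    intro z
    have hfz : HasDerivAt f ((2 * a * z + b) * f z) z := by
      rw [← hode z]; exact (hf z).hasDerivAt
    have he : HasDerivAt (fun z : ℂ => Complex.exp (-(a * z ^ 2 + b * z)))
        (Complex.exp (-(a * z ^ 2 + b * z)) * (-(2 * a * z + b))) z := ((hgd z).neg).cexp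
    exact (hfz.mul he).congr_deriv (by ring)
  have hconst : ∀ z, f z * Complex.exp (-(a * z ^ 2 + b * z)) = f 0 := by
    intro z
    have := is_const_of_deriv_eq_zero (𝕜 := ℂ)
      (f := fun z => f z * Complex.exp (-(a * z ^ 2 + b * z)))
      (fun w => ((hh w).differentiableAt)) (fun w => (hh w).deriv) z 0
    simpa using this
  intro z
  have h := hconst z
  rw [Complex.exp_neg, ← div_eq_mul_inv, div_eq_iff (Complex.exp_ne_zero _)] at h
  exact h

theorem no_eigenvalues (A B C : ℂ) (hC : C ≠ 0) (hAC : ‖C‖ ≤ ‖A‖) :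
    ¬ ∃ (ζ : ℂ) (f : ℂ → ℂ), MemFock f ∧ f ≠ 0 ∧
      ∀ z : ℂ, (A * z + B) * f z + C * deriv f z = ζ * f z := by
  rintro ⟨ζ, f, ⟨hdiff, hint⟩, hne, heig⟩
  have hCpos : 0 < ‖C‖ := norm_pos_iff.mpr hC
  set a : ℂ := -A / (2 * C) with ha
  set b : ℂ := (ζ - B) / C with hb
  -- the ODE
  have hode : ∀ z, deriv f z = (2 * a * z + b) * f z := by
    intro z
    apply mul_left_cancel₀ hC
    have h2 : C * ((2 * a * z + b) * f z) = (ζ - B - A * z) * f z := by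
      rw [ha, hb]; field_simp; ring
    rw [h2]
    linear_combination heig z
  have hsol := ode_solution f hdiff a b hode
  have hf0 : f 0 ≠ 0 := by
    intro h0
    apply hne
    funext z
    show f z = 0
    rw [hsol z, h0, zero_mul]
  -- |2a| ≥ 1
  have hra : ‖a‖ = ‖A‖ / (2 * ‖C‖) := by
    rw [ha, norm_div, norm_neg, norm_mul, Complex.norm_two]
  have h2r : 1 ≤ 2 * ‖a‖ := by
    rw [hra, show (2:ℝ) * (‖A‖ / (2 * ‖C‖)) = ‖A‖ / ‖C‖
      by field_simp]
    exact (one_le_div hCpos).mpr hAC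
  set r : ℝ := ‖a‖ with hr
  -- rotation u with a u² = -r
  obtain ⟨u, hau⟩ : ∃ u : Circle, a * (u : ℂ) ^ 2 = -(r : ℂ) := by
    refine ⟨Circle.exp ((Real.pi - a.arg) / 2), ?_⟩
    have habs := Complex.norm_mul_exp_arg_mul_I a
    have hu2 : (Circle.exp ((Real.pi - a.arg) / 2) : ℂ) ^ 2
        = Complex.exp ((Real.pi : ℂ) * I) * Complex.exp (-(a.arg * I)) := by
      rw [Circle.coe_exp, sq, ← Complex.exp_add, ← Complex.exp_add]
      congr 1
      push_cast
      ring
    rw [hu2, Complex.exp_pi_mul_I]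
    have h1 : a * Complex.exp (-(a.arg * I)) = (r : ℂ) := by
      rw [Complex.exp_neg, mul_inv_eq_iff_eq_mul₀ (Complex.exp_ne_zero _)]
      exact habs.symm
    linear_combination (-1) * h1
  set b' : ℂ := b * (u : ℂ) with hb'
  set c : ℝ := ‖f 0‖ ^ 2 with hc
  have hcpos : 0 < c := by
    have : 0 < ‖f 0‖ := norm_pos_iff.mpr hf0
    positivity
  -- rewrite the integrand
  have hF : (fun z : ℂ => ‖f z‖ ^ 2 * Real.exp (-‖z‖ ^ 2))
      = fun z : ℂ => c * Real.exp (2 * (a * z ^ 2 + b * z).re - ‖z‖ ^ 2) := by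
    funext z
    rw [hsol z, norm_mul, mul_pow, Complex.norm_exp,
      ← Real.exp_nat_mul, mul_assoc, ← Real.exp_add]
    push_cast
    ring_nf
    rw [hc]; ring
  rw [hF] at hint
  -- rotate
  have hcomp : Integrable (fun w : ℂ =>
      c * Real.exp (2 * (a * ((u : ℂ) * w) ^ 2 + b * ((u : ℂ) * w)).re - ‖(u : ℂ) * w‖ ^ 2)) := by
    have h2 := (integrable_comp (rotation u)
      (fun z : ℂ => c * Real.exp (2 * (a * z ^ 2 + b * z).re - ‖z‖ ^ 2))).mpr hint
    simpa only [Function.comp_def, rotation_apply] using h2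
  have hG : Integrable (fun w : ℂ =>
      c * Real.exp (2 * (-(r : ℂ) * w ^ 2 + b' * w).re - ‖w‖ ^ 2)) := by
    refine hcomp.congr (Filter.Eventually.of_forall fun w => ?_)
    have hkey : a * ((u : ℂ) * w) ^ 2 + b * ((u : ℂ) * w) = -(r : ℂ) * w ^ 2 + b' * w := by
      rw [hb']; linear_combination w ^ 2 * hau
    simp only [hkey, norm_mul, Circle.norm_coe, one_mul]
  -- to ℝ × ℝ
  have h3 : Integrable (fun p : ℝ × ℝ =>
      c * Real.exp (2 * (-(r : ℂ) * (Complex.measurableEquivRealProd.symm p) ^ 2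
        + b' * (Complex.measurableEquivRealProd.symm p)).re
        - ‖Complex.measurableEquivRealProd.symm p‖ ^ 2)) :=
    ((MeasurePreserving.symm Complex.measurableEquivRealProd Complex.volume_preserving_equiv_real_prod).integrable_comp_emb
      (MeasurableEquiv.measurableEmbedding _)).mpr hG
  rw [show (volume : Measure (ℝ × ℝ)) = (volume : Measure ℝ).prod volume from rfl] at h3
  have h4 := h3.prod_right_ae
  haveI : (MeasureTheory.ae (volume : Measure ℝ)).NeBot := by
    rw [ae_neBot]
    simp [← Measure.measure_univ_eq_zero]
  obtain ⟨x0, hx0⟩ := h4.exists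
  refine exp_affine_not_integrable
    (c * Real.exp (-(2 * r + 1) * x0 ^ 2 + 2 * b'.re * x0)) (-2 * b'.im) (by positivity) _
    (fun y => ?_) hx0
  show c * Real.exp (-(2 * r + 1) * x0 ^ 2 + 2 * b'.re * x0) * Real.exp (-2 * b'.im * y)
      ≤ c * Real.exp (2 * (-(r : ℂ) * (Complex.measurableEquivRealProd.symm (x0, y)) ^ 2
        + b' * (Complex.measurableEquivRealProd.symm (x0, y))).re
        - ‖Complex.measurableEquivRealProd.symm (x0, y)‖ ^ 2)
  set w : ℂ := Complex.measurableEquivRealProd.symm (x0, y) with hw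
  have hwre : w.re = x0 := by simp [hw, Complex.measurableEquivRealProd]
  have hwim : w.im = y := by simp [hw, Complex.measurableEquivRealProd]
  have hn : ‖w‖ ^ 2 = x0 ^ 2 + y ^ 2 := by
    rw [Complex.sq_norm, Complex.normSq_apply, hwre, hwim]
    ring
  have hre : 2 * (-(r : ℂ) * w ^ 2 + b' * w).re - ‖w‖ ^ 2
      = -(2 * r + 1) * x0 ^ 2 + (2 * r - 1) * y ^ 2 + 2 * b'.re * x0 - 2 * b'.im * y := by
    rw [hn]
    simp only [Complex.add_re, Complex.mul_re, Complex.mul_im, Complex.neg_re, Complex.neg_im,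
      Complex.ofReal_re, Complex.ofReal_im, pow_two, Complex.mul_re, Complex.mul_im,
      hwre, hwim]
    ring
  rw [hre, mul_assoc, ← Real.exp_add]
  have hle : -(2 * r + 1) * x0 ^ 2 + 2 * b'.re * x0 + -2 * b'.im * y
      ≤ -(2 * r + 1) * x0 ^ 2 + (2 * r - 1) * y ^ 2 + 2 * b'.re * x0 - 2 * b'.im * y := by
    nlinarith [sq_nonneg y]
  exact mul_le_mul_of_nonneg_left (Real.exp_le_exp.mpr hle) hcpos.le
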